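/- Formal power series inequality: (Σ_{n≥3} xⁿ/(4β)ⁿ) · (Σ_{n≥3} xⁿ/(2β)ⁿ) ⪯ (1/4) · Σ_{n≥6} xⁿ/(2β)ⁿ, coefficientwise, for any β > 0. -/

import Mathlib

lemma aux_geom (m : ℕ) (hm : 3 ≤ m) :
    (∑ k ∈ Finset.range m, (if 3 ≤ k then ((1:ℝ)/2)^k else 0)) + 2*(1/2)^m ≤ 1/4 := by
  induction m, hm using Nat.le_induction with
  | base =>
    norm_num [Finset.sum_range_succ]
  | succ m hm ih =>
    rw [Finset.sum_range_succ, if_pos hm]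
    have h : (2:ℝ)*(1/2)^(m+1) = (1/2)^m := by ring
    linarith

theorem stmt_15 (β : ℝ) (hβ : 0 < β) :
    let A : PowerSeries ℝ :=
      PowerSeries.mk fun n => if 3 ≤ n then 1 / (4*β)^n else 0
    let B : PowerSeries ℝ :=
      PowerSeries.mk fun n => if 3 ≤ n then 1 / (2*β)^n else 0
    ∀ n, PowerSeries.coeff n (A * B)
      ≤ if 6 ≤ n then (1/4) * (1 / (2*β)^n) else 0 := by
  intro A B n
  rw [show A * B = A * B from rfl, PowerSeries.coeff_mul]
  simp only [A, B, PowerSeries.coeff_mk]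
  rw [Finset.Nat.sum_antidiagonal_eq_sum_range_succ_mk]
  by_cases hn : 6 ≤ n
  · rw [if_pos hn]
    have step : ∀ k ∈ Finset.range (n+1),
        (if 3 ≤ k then 1/(4*β)^k else 0) * (if 3 ≤ n-k then 1/(2*β)^(n-k) else 0)
          ≤ (if 3 ≤ k then ((1:ℝ)/2)^k else 0) * (1/(2*β)^n) := by
      intro k hk
      have hkn : k ≤ n := by simp [Finset.mem_range] at hk; omega
      by_cases h3 : 3 ≤ k
      · rw [if_pos h3, if_pos h3]
        by_cases h3' : 3 ≤ n - k
        · rw [if_pos h3']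
          apply le_of_eq
          have hden : (4*β)^k * (2*β)^(n-k) = 2^k * (2*β)^n := by
            rw [show (4:ℝ)*β = 2*(2*β) by ring, mul_pow, mul_assoc, ← pow_add]
            congr 2
            omega
          rw [div_mul_div_comm, one_mul, hden, div_pow, one_pow,
            div_mul_div_comm, one_mul]
        · rw [if_neg h3', mul_zero]
          positivity
      · rw [if_neg h3, if_neg h3, zero_mul, zero_mul]
    calc ∑ k ∈ Finset.range (n+1),
          (if 3 ≤ k then 1/(4*β)^k else 0) * (if 3 ≤ n-k then 1/(2*β)^(n-k) else 0)
        ≤ ∑ k ∈ Finset.range (n+1), (if 3 ≤ k then ((1:ℝ)/2)^k else 0) * (1/(2*β)^n) :=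
          Finset.sum_le_sum step
      _ ≤ 1/4 * (1/(2*β)^n) := by
          rw [← Finset.sum_mul]
          apply mul_le_mul_of_nonneg_right _ (by positivity)
          have h1 := aux_geom (n+1) (by omega)
          have h2 : (0:ℝ) ≤ 2*(1/2)^(n+1) := by positivity
          linarith
  · rw [if_neg hn]
    apply le_of_eq
    apply Finset.sum_eq_zero
    intro k hk
    simp only [Finset.mem_range] at hk
    by_cases h3 : 3 ≤ k
    · rw [if_neg (by omega : ¬ 3 ≤ n - k), mul_zero]
    · rw [if_neg h3, zero_mul]
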